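/- Let N be a Young function, q > 2 and κ ∈ {0,1} with N(r·s) ≤ r^q·(N(s) + 2κ) for all r ≥ 2, s ≥ 0. Let (E,μ) be a σ-finite measure space with μ(E) < ∞ in case κ = 1, T > 0, (Ω,P) a probability space, and μ̄ := dt ⊗ μ ⊗ P on [0,T] × E × Ω. Let f be measurable with 0 < ‖f‖_{L_N(μ̄)} < ∞. Then ∫_Ω ∫_0^T ‖f(t,·,ω)‖_{L_N(μ)} dt P(dω) ≤ (‖f‖_{L_N(μ̄)} + 2)^q · (1 + 2·T·μ(E)·κ) + T. In particular L_N(μ̄) embeds continuously into L¹([0,T]×Ω → L_N(μ); dt×P). (Paper Lemma 3.7, continuity of the third embedding.) -/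

import Mathlib

open Filter MeasureTheory
open scoped ENNReal

/-- A Young function: continuous, convex, even, nonnegative, vanishing exactly at `0`,
with `N s / s → 0` as `s → 0⁺` and `N s / s → ∞` as `s → ∞`. -/
def IsYoungFunction (N : ℝ → ℝ) : Prop :=
  Continuous N ∧ ConvexOn ℝ Set.univ N ∧ (∀ s, N (-s) = N s) ∧
  (∀ s, 0 ≤ N s) ∧ (∀ s, N s = 0 ↔ s = 0) ∧
  Tendsto (fun s => N s / s) (nhdsWithin 0 (Set.Ioi 0)) (nhds 0) ∧
  Tendsto (fun s => N s / s) atTop atTop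

/-- The Luxemburg norm `inf { λ > 0 : ∫ N(f/λ) dμ ≤ 1 }`, with `inf ∅ = ∞`. -/
noncomputable def luxemburgNorm {X : Type*} [MeasurableSpace X] (N : ℝ → ℝ)
    (μ : Measure X) (f : X → ℝ) : ℝ≥0∞ :=
  ⨅ (lam : ℝ) (_ : 0 < lam) (_ : ∫⁻ x, ENNReal.ofReal (N (f x / lam)) ∂μ ≤ 1),
    ENNReal.ofReal lam

lemma young_zero {N : ℝ → ℝ} (hN : IsYoungFunction N) : N 0 = 0 :=
  (hN.2.2.2.2.1 0).mpr rfl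

lemma young_mono {N : ℝ → ℝ} (hN : IsYoungFunction N) {a b : ℝ} (ha : 0 ≤ a) (hab : a ≤ b) :
    N a ≤ N b := by
  rcases eq_or_lt_of_le (ha.trans hab) with hb | hb
  · have h1 : a = 0 := le_antisymm (hab.trans hb.symm.le) ha
    rw [h1, ← hb]
  · have h2 := hN.2.1.2 (Set.mem_univ b) (Set.mem_univ (0:ℝ))
      (div_nonneg ha hb.le)
      (by nlinarith [div_le_one_of_le₀ hab hb.le] : (0:ℝ) ≤ 1 - a / b)
      (by ring)
    rw [smul_eq_mul, smul_eq_mul, smul_eq_mul, smul_eq_mul, mul_zero, add_zero,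
      div_mul_cancel₀ _ hb.ne', young_zero hN, mul_zero, add_zero] at h2
    calc N a ≤ a / b * N b := h2
      _ ≤ 1 * N b :=
          mul_le_mul_of_nonneg_right (div_le_one_of_le₀ hab hb.le) (hN.2.2.2.1 b)
      _ = N b := one_mul _

lemma young_abs {N : ℝ → ℝ} (hN : IsYoungFunction N) (s : ℝ) : N |s| = N s := by
  rcases abs_cases s with ⟨h, _⟩ | ⟨h, _⟩
  · rw [h]
  · rw [h, hN.2.2.1]

/-- Fiberwise bound: `‖g‖_{L_N(μ)} ≤ ∫ N(g) dμ + 1`. -/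
lemma young_lux_le {X : Type*} [MeasurableSpace X] {N : ℝ → ℝ} (hN : IsYoungFunction N)
    (μ : Measure X) (g : X → ℝ) :
    luxemburgNorm N μ g ≤ (∫⁻ x, ENNReal.ofReal (N (g x)) ∂μ) + 1 := by
  set A := ∫⁻ x, ENNReal.ofReal (N (g x)) ∂μ with hA
  rcases eq_or_ne A ⊤ with hAt | hAt
  · rw [hAt]; simp
  have hA0 : (0:ℝ) ≤ A.toReal := ENNReal.toReal_nonneg
  set lam : ℝ := A.toReal + 1 with hlam
  have hlam1 : (1:ℝ) ≤ lam := by rw [hlam]; linarith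
  have hlampos : (0:ℝ) < lam := by linarith
  have hinv0 : (0:ℝ) ≤ lam⁻¹ := by positivity
  have hinv1 : lam⁻¹ ≤ 1 := by
    rw [inv_le_one_iff₀]; right; exact hlam1
  have hptwise : ∀ x, N (g x / lam) ≤ lam⁻¹ * N (g x) := by
    intro x
    have h2 := hN.2.1.2 (Set.mem_univ (g x)) (Set.mem_univ (0:ℝ))
      hinv0 (by linarith : (0:ℝ) ≤ 1 - lam⁻¹) (by ring)
    rw [smul_eq_mul, smul_eq_mul, smul_eq_mul, smul_eq_mul, mul_zero, add_zero,
      young_zero hN, mul_zero, add_zero, inv_mul_eq_div] at h2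
    exact h2
  have hmod : ∫⁻ x, ENNReal.ofReal (N (g x / lam)) ∂μ ≤ 1 := by
    calc ∫⁻ x, ENNReal.ofReal (N (g x / lam)) ∂μ
        ≤ ∫⁻ x, ENNReal.ofReal lam⁻¹ * ENNReal.ofReal (N (g x)) ∂μ := by
          refine lintegral_mono fun x => ?_
          rw [← ENNReal.ofReal_mul hinv0]
          exact ENNReal.ofReal_le_ofReal (hptwise x)
      _ = ENNReal.ofReal lam⁻¹ * A := lintegral_const_mul' _ _ ENNReal.ofReal_ne_top
      _ ≤ 1 := by
          rw [← ENNReal.ofReal_toReal hAt, ← ENNReal.ofReal_mul hinv0, ← ENNReal.ofReal_one]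
          apply ENNReal.ofReal_le_ofReal
          rw [inv_mul_le_iff₀ hlampos, mul_one]
          linarith
  calc luxemburgNorm N μ g ≤ ENNReal.ofReal lam := by
        refine iInf_le_of_le lam ?_
        rw [iInf_pos hlampos, iInf_pos hmod]
    _ = A + 1 := by
        rw [hlam, ENNReal.ofReal_add hA0 zero_le_one, ENNReal.ofReal_one,
          ENNReal.ofReal_toReal hAt]

/-- Paper Lemma 3.7, continuity of the third embedding: on `μ̄ = dt ⊗ μ ⊗ P`,
`∫∫ ‖f(t,·,ω)‖_{L_N(μ)} dt P(dω) ≤ (‖f‖_{L_N(μ̄)} + 2)^q (1 + 2 T μ(E) κ) + T`;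
i.e. `L_N(μ̄)` embeds continuously into `L¹([0,T]×Ω → L_N(μ))`. -/
theorem stmt15 {E Ω : Type*} [MeasurableSpace E] [MeasurableSpace Ω]
    (μ : Measure E) [SigmaFinite μ] (P : Measure Ω) [IsProbabilityMeasure P]
    (N : ℝ → ℝ) (hN : IsYoungFunction N) (q κ : ℝ) (hq : 2 < q) (hκ : κ = 0 ∨ κ = 1)
    (hΔ : ∀ r s : ℝ, 2 ≤ r → 0 ≤ s → N (r * s) ≤ r ^ q * (N s + 2 * κ))
    (hfin : κ = 1 → μ Set.univ < ⊤)
    (T : ℝ) (hT : 0 < T)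
    (f : ℝ × E × Ω → ℝ) (hf : Measurable f)
    (h0 : 0 < luxemburgNorm N ((volume.restrict (Set.Icc (0:ℝ) T)).prod (μ.prod P)) f)
    (hfn : luxemburgNorm N ((volume.restrict (Set.Icc (0:ℝ) T)).prod (μ.prod P)) f < ⊤) :
    ∫⁻ p, luxemburgNorm N μ (fun e => f (p.1, e, p.2))
        ∂((volume.restrict (Set.Icc (0:ℝ) T)).prod P) ≤
      (luxemburgNorm N ((volume.restrict (Set.Icc (0:ℝ) T)).prod (μ.prod P)) f + 2) ^ q *
          (1 + 2 * ENNReal.ofReal T * μ Set.univ * ENNReal.ofReal κ)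
        + ENNReal.ofReal T := by
  set ν := volume.restrict (Set.Icc (0:ℝ) T) with hν
  set μbar := ν.prod (μ.prod P) with hμbar
  set L := luxemburgNorm N μbar f with hL
  have hκ0 : (0:ℝ) ≤ κ := by rcases hκ with h | h <;> simp [h]
  have hq0 : (0:ℝ) ≤ q := by linarith
  -- extract a near-optimal Luxemburg witness
  have hlt : (⨅ (lam : ℝ) (_ : 0 < lam)
      (_ : ∫⁻ x, ENNReal.ofReal (N (f x / lam)) ∂μbar ≤ 1), ENNReal.ofReal lam) < L + 1 := by
    rw [← luxemburgNorm, ← hL]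
    exact ENNReal.lt_add_right hfn.ne one_ne_zero
  obtain ⟨lam, hlam'⟩ := iInf_lt_iff.mp hlt
  obtain ⟨hlampos, hlam''⟩ := iInf_lt_iff.mp hlam'
  obtain ⟨hmod, hlamlt⟩ := iInf_lt_iff.mp hlam''
  set r : ℝ := max lam 1 + 1 with hr
  have hr2 : (2:ℝ) ≤ r := by
    rw [hr]; have := le_max_right lam 1; linarith
  have hrpos : (0:ℝ) < r := by linarith
  have hrlam : lam ≤ r := by
    rw [hr]; have := le_max_left lam 1; linarith
  have hrL : ENNReal.ofReal r ≤ L + 2 := by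
    rcases le_total lam 1 with h | h
    · have hre : r = 2 := by rw [hr, max_eq_right h]; norm_num
      rw [hre]
      calc ENNReal.ofReal 2 = 2 := by norm_num
        _ = 0 + 2 := (zero_add _).symm
        _ ≤ L + 2 := add_le_add zero_le le_rfl
    · have hre : r = lam + 1 := by rw [hr, max_eq_left h]
      rw [hre, ENNReal.ofReal_add (by linarith) zero_le_one, ENNReal.ofReal_one]
      calc ENNReal.ofReal lam + 1 ≤ (L + 1) + 1 := add_le_add hlamlt.le le_rfl
        _ = L + 2 := by ring
  -- pointwise growth bound
  have key : ∀ s : ℝ, N s ≤ r ^ q * (N (s / lam) + 2 * κ) := by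
    intro s
    have h1 : N s = N (r * (|s| / r)) := by
      rw [mul_comm, div_mul_cancel₀ _ hrpos.ne', young_abs hN]
    have h2 := hΔ r (|s| / r) hr2 (by positivity)
    have h3 : N (|s| / r) ≤ N (s / lam) := by
      have hle : |s| / r ≤ |s| / lam :=
        div_le_div_of_nonneg_left (abs_nonneg s) hlampos hrlam
      have h5 := young_mono hN (by positivity) hle
      have h4 : |s| / lam = |s / lam| := by
        rw [abs_div, abs_of_pos hlampos]
      rwa [h4, young_abs hN] at h5
    have hrq : (0:ℝ) ≤ r ^ q := Real.rpow_nonneg hrpos.le q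
    calc N s = N (r * (|s| / r)) := h1
      _ ≤ r ^ q * (N (|s| / r) + 2 * κ) := h2
      _ ≤ r ^ q * (N (s / lam) + 2 * κ) :=
          mul_le_mul_of_nonneg_left (by linarith) hrq
  have keyENN : ∀ x, ENNReal.ofReal (N (f x)) ≤
      ENNReal.ofReal (r ^ q) * (ENNReal.ofReal (N (f x / lam)) + ENNReal.ofReal (2 * κ)) := by
    intro x
    calc ENNReal.ofReal (N (f x))
        ≤ ENNReal.ofReal (r ^ q * (N (f x / lam) + 2 * κ)) :=
          ENNReal.ofReal_le_ofReal (key (f x))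
      _ = ENNReal.ofReal (r ^ q) * (ENNReal.ofReal (N (f x / lam)) + ENNReal.ofReal (2 * κ)) := by
          rw [ENNReal.ofReal_mul (Real.rpow_nonneg hrpos.le q),
            ENNReal.ofReal_add (hN.2.2.2.1 _) (by positivity)]
  -- measurability
  have hg : Measurable fun x : ℝ × E × Ω => ENNReal.ofReal (N (f x)) :=
    ENNReal.measurable_ofReal.comp ((hN.1.measurable).comp hf)
  have hH : Measurable fun p : ℝ × Ω => ∫⁻ e, ENNReal.ofReal (N (f (p.1, e, p.2))) ∂μ := by
    apply Measurable.lintegral_prod_right (f := fun (p : ℝ × Ω) (e : E) =>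
      ENNReal.ofReal (N (f (p.1, e, p.2))))
    exact hg.comp (by fun_prop)
  -- measures
  have hνuniv : ν Set.univ = ENNReal.ofReal T := by
    rw [hν, Measure.restrict_apply_univ, Real.volume_Icc, sub_zero]
  have hνP : (ν.prod P) Set.univ = ENNReal.ofReal T := by
    rw [← Set.univ_prod_univ, Measure.prod_prod, measure_univ (μ := P), mul_one, hνuniv]
  have hμbaruniv : μbar Set.univ = ENNReal.ofReal T * μ Set.univ := by
    rw [hμbar, ← Set.univ_prod_univ, Measure.prod_prod, ← Set.univ_prod_univ,
      Measure.prod_prod, measure_univ (μ := P), mul_one, hνuniv]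
  -- Tonelli
  have tonelli : ∫⁻ p, (∫⁻ e, ENNReal.ofReal (N (f (p.1, e, p.2))) ∂μ) ∂(ν.prod P)
      = ∫⁻ x, ENNReal.ofReal (N (f x)) ∂μbar := by
    rw [hμbar, lintegral_prod _ hH.aemeasurable, lintegral_prod _ hg.aemeasurable]
    refine lintegral_congr fun t => ?_
    have hm : Measurable fun y : E × Ω => ENNReal.ofReal (N (f (t, y))) :=
      hg.comp (by fun_prop)
    rw [lintegral_prod _ hm.aemeasurable]
    exact lintegral_lintegral_swap
      ((hg.comp (by fun_prop : Measurable fun y : Ω × E => (t, y.2, y.1))).aemeasurable)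
  -- main chain
  calc ∫⁻ p, luxemburgNorm N μ (fun e => f (p.1, e, p.2)) ∂(ν.prod P)
      ≤ ∫⁻ p, (∫⁻ e, ENNReal.ofReal (N (f (p.1, e, p.2))) ∂μ) + 1 ∂(ν.prod P) :=
        lintegral_mono fun p => young_lux_le hN μ _
    _ = (∫⁻ p, (∫⁻ e, ENNReal.ofReal (N (f (p.1, e, p.2))) ∂μ) ∂(ν.prod P))
          + ENNReal.ofReal T := by
        rw [lintegral_add_right _ measurable_const, lintegral_const, hνP, one_mul]
    _ = (∫⁻ x, ENNReal.ofReal (N (f x)) ∂μbar) + ENNReal.ofReal T := by rw [tonelli]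
    _ ≤ ENNReal.ofReal (r ^ q) * (1 + ENNReal.ofReal (2 * κ) * μbar Set.univ)
          + ENNReal.ofReal T := by
        gcongr ?_ + _
        calc ∫⁻ x, ENNReal.ofReal (N (f x)) ∂μbar
            ≤ ∫⁻ x, ENNReal.ofReal (r ^ q) *
                (ENNReal.ofReal (N (f x / lam)) + ENNReal.ofReal (2 * κ)) ∂μbar :=
              lintegral_mono keyENN
          _ = ENNReal.ofReal (r ^ q) * ((∫⁻ x, ENNReal.ofReal (N (f x / lam)) ∂μbar)
                + ENNReal.ofReal (2 * κ) * μbar Set.univ) := by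
              rw [lintegral_const_mul' _ _ ENNReal.ofReal_ne_top,
                lintegral_add_right _ measurable_const, lintegral_const]
          _ ≤ ENNReal.ofReal (r ^ q) * (1 + ENNReal.ofReal (2 * κ) * μbar Set.univ) := by
              gcongr
    _ ≤ (L + 2) ^ q * (1 + 2 * ENNReal.ofReal T * μ Set.univ * ENNReal.ofReal κ)
          + ENNReal.ofReal T := by
        gcongr ?_ + _
        have h1 : ENNReal.ofReal (r ^ q) ≤ (L + 2) ^ q := by
          rw [← ENNReal.ofReal_rpow_of_pos hrpos]
          exact ENNReal.rpow_le_rpow hrL hq0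
        have h2 : ENNReal.ofReal (2 * κ) * μbar Set.univ
            = 2 * ENNReal.ofReal T * μ Set.univ * ENNReal.ofReal κ := by
          rw [hμbaruniv, ENNReal.ofReal_mul (by norm_num : (0:ℝ) ≤ 2),
            (by norm_num : ENNReal.ofReal 2 = (2:ℝ≥0∞))]
          ring
        rw [← h2]
        exact mul_le_mul' h1 le_rfl
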